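/- Let X = ⋂_{i=1}^N {x ∈ ℝ^m : ⟪x, nᵢ⟫ ≤ cᵢ} be a convex polytope, let y ∈ X with active index set A(y), and let v ∈ N_y⁺X \ {0} and w ∈ T_y⁺X \ {0}. Then ⟪v, w⟫ = 0 if and only if v lies in the convex cone generated by {nᵢ : i ∈ A(y) and ⟪w, nᵢ⟫ = 0}, i.e. v = Σ aᵢ nᵢ with aᵢ ≥ 0 and the sum running over those active indices i with ⟪w, nᵢ⟫ = 0. (Point form of Lemma 3.3: equivalently, there is a face E of X whose closure contains the face through y, with v ∈ N_E⁺X and w tangent to the closure of E.) -/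

import Mathlib

open RealInnerProductSpace

/-- The tangent cone `T_y⁺X`: the closure of the set of directions `v` such that
`y + ε v ∈ X` for some `ε > 0`. -/
def tangentConePlus {m : ℕ} (X : Set (EuclideanSpace ℝ (Fin m)))
    (y : EuclideanSpace ℝ (Fin m)) : Set (EuclideanSpace ℝ (Fin m)) :=
  closure {v | ∃ ε : ℝ, 0 < ε ∧ y + ε • v ∈ X}

/-- The positive normal cone `N_y⁺X`. -/
def normalConePlus {m : ℕ} (X : Set (EuclideanSpace ℝ (Fin m)))
    (y : EuclideanSpace ℝ (Fin m)) : Set (EuclideanSpace ℝ (Fin m)) :=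
  {v | ∀ x ∈ X, ⟪x - y, v⟫ ≤ 0}

section Aux

open Finset

variable {E : Type*} [NormedAddCommGroup E] [InnerProductSpace ℝ E]

lemma exists_pos_forall_le {N : ℕ} (F : Fin N → ℝ) (hF : ∀ i, 0 < F i) :
    ∃ δ : ℝ, 0 < δ ∧ ∀ i, δ ≤ F i := by
  rcases isEmpty_or_nonempty (Fin N) with h | h
  · exact ⟨1, one_pos, fun i => (h.false i).elim⟩
  · obtain ⟨j, -, hj⟩ := Finset.exists_min_image Finset.univ F ⟨h.some, Finset.mem_univ _⟩
    exact ⟨F j, hF j, fun i => hj i (Finset.mem_univ i)⟩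

variable [FiniteDimensional ℝ E]

lemma feasible_dir {N : ℕ} (n : Fin N → E) (c : Fin N → ℝ)
    (X : Set E) (hX : X = ⋂ i, {x | ⟪x, n i⟫ ≤ c i})
    (y : E) (hy : y ∈ X) (z : E)
    (hz : ∀ i, ⟪y, n i⟫ = c i → ⟪z, n i⟫ ≤ 0) :
    ∃ ε : ℝ, 0 < ε ∧ y + ε • z ∈ X := by
  classical
  have hyle : ∀ i, ⟪y, n i⟫ ≤ c i := by
    intro i; exact Set.mem_iInter.mp (hX ▸ hy) i
  set G : Fin N → ℝ := fun i =>
    if ⟪y, n i⟫ = c i then 1 else (c i - ⟪y, n i⟫) / (1 + |⟪z, n i⟫|) with hG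
  have hGpos : ∀ i, 0 < G i := by
    intro i
    by_cases h : ⟪y, n i⟫ = c i
    · simp [hG, h]
    · have : ⟪y, n i⟫ < c i := lt_of_le_of_ne (hyle i) h
      simp only [hG, if_neg h]
      have h1 : (0:ℝ) < 1 + |⟪z, n i⟫| := by positivity
      exact div_pos (by linarith) h1
  obtain ⟨ε, hε, hεle⟩ := exists_pos_forall_le G hGpos
  refine ⟨ε, hε, ?_⟩
  rw [hX]
  refine Set.mem_iInter.mpr (fun i => ?_)
  show ⟪y + ε • z, n i⟫ ≤ c i
  rw [inner_add_left, real_inner_smul_left]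
  by_cases h : ⟪y, n i⟫ = c i
  · have := mul_nonpos_of_nonneg_of_nonpos hε.le (hz i h)
    linarith [hyle i]
  · have hlt : ⟪y, n i⟫ < c i := lt_of_le_of_ne (hyle i) h
    have h1 : (0:ℝ) < 1 + |⟪z, n i⟫| := by positivity
    have := hεle i
    rw [hG] at this
    simp only [if_neg h] at this
    rw [le_div_iff₀ h1] at this
    nlinarith [le_abs_self ⟪z, n i⟫, abs_nonneg ⟪z, n i⟫]



lemma cone_carath {N : ℕ} (n : Fin N → E) :
    ∀ (s : Finset (Fin N)) (a : Fin N → ℝ), (∀ i, 0 ≤ a i) → (∀ i ∉ s, a i = 0) →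
    ∃ (t : Finset (Fin N)) (b : Fin N → ℝ), t ⊆ s ∧
      LinearIndependent ℝ (fun i : t => n i) ∧ (∀ i, 0 ≤ b i) ∧ (∀ i ∉ t, b i = 0) ∧
      ∑ i, b i • n i = ∑ i, a i • n i := by
  intro s
  induction s using Finset.strongInduction with
  | _ s ih =>
    intro a ha hsupp
    by_cases hdep : LinearIndependent ℝ (fun i : s => n i)
    · exact ⟨s, a, subset_rfl, hdep, ha, hsupp, rfl⟩
    · rw [Fintype.not_linearIndependent_iff] at hdep
      obtain ⟨g, hg, i0, hi0⟩ := hdep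
      -- extend g to Fin N
      classical
      set g' : Fin N → ℝ := fun i => if h : i ∈ s then g ⟨i, h⟩ else 0 with hg'def
      have hg'sum : ∑ i, g' i • n i = 0 := by
        rw [← Finset.sum_subset (Finset.subset_univ s)
          (by intro x _ hx; simp [hg'def, hx])]
        rw [← Finset.sum_attach s (fun i => g' i • n i)]
        convert hg using 1
        exact Finset.sum_congr rfl (fun i _ => by simp [hg'def, i.2])
      have hex : ∃ g'' : Fin N → ℝ, (∑ i, g'' i • n i = 0) ∧ (∀ i ∉ s, g'' i = 0)
          ∧ ∃ j ∈ s, 0 < g'' j := by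
        rcases lt_trichotomy (g i0) 0 with h | h | h
        · refine ⟨-g', by simp [hg'sum], fun i hi => by simp [hg'def, hi], i0.1, i0.2, ?_⟩
          simp only [hg'def, Pi.neg_apply, dif_pos i0.2]
          simpa using h
        · exact absurd h hi0
        · exact ⟨g', hg'sum, fun i hi => by simp [hg'def, hi], i0.1, i0.2, by simpa [hg'def, i0.2] using h⟩
      obtain ⟨g'', hgsum, hgsupp, j0, hj0s, hj0⟩ := hex
      -- minimize a i / g'' i over positive part
      have hPne : (s.filter (fun i => 0 < g'' i)).Nonempty := ⟨j0, by simp [hj0s, hj0]⟩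
      obtain ⟨j, hjP, hjmin⟩ := Finset.exists_min_image _ (fun i => a i / g'' i) hPne
      simp only [Finset.mem_filter] at hjP
      obtain ⟨hjs, hjpos⟩ := hjP
      set t0 : ℝ := a j / g'' j with ht0
      have ht0nn : 0 ≤ t0 := div_nonneg (ha j) hjpos.le
      set b : Fin N → ℝ := fun i => a i - t0 * g'' i with hb
      have hbnn : ∀ i, 0 ≤ b i := by
        intro i
        by_cases his : i ∈ s
        · rcases le_or_gt (g'' i) 0 with h | h
          · have : t0 * g'' i ≤ 0 := mul_nonpos_of_nonneg_of_nonpos ht0nn h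
            simp only [hb]; linarith [ha i]
          · have := hjmin i (by simp [his, h])
            rw [div_le_div_iff₀ hjpos h] at this
            simp only [hb, ht0]
            rw [div_mul_eq_mul_div, sub_nonneg, div_le_iff₀ hjpos]
            linarith
        · simp [hb, hsupp i his, hgsupp i his]
      have hbj : b j = 0 := by
        simp only [hb, ht0]
        field_simp
        ring
      have hbsupp : ∀ i ∉ s.erase j, b i = 0 := by
        intro i hi
        by_cases h : i = j
        · rw [h]; exact hbj
        · have his : i ∉ s := fun his => hi (Finset.mem_erase.mpr ⟨h, his⟩)
          simp [hb, hsupp i his, hgsupp i his]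
      have hbsum : ∑ i, b i • n i = ∑ i, a i • n i := by
        simp only [hb, sub_smul, mul_smul, Finset.sum_sub_distrib]
        rw [← Finset.smul_sum, hgsum, smul_zero, sub_zero]
      obtain ⟨t, b', hts, hind, hb'nn, hb'supp, hb'sum⟩ :=
        ih (s.erase j) (Finset.erase_ssubset hjs) b hbnn hbsupp
      exact ⟨t, b', hts.trans (Finset.erase_subset _ _), hind, hb'nn, hb'supp,
        hb'sum.trans hbsum⟩


lemma isClosed_indep_cone {N : ℕ} (n : Fin N → E) (t : Finset (Fin N))
    (hind : LinearIndependent ℝ (fun i : t => n i)) :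
    IsClosed {x : E | ∃ a : Fin N → ℝ, (∀ i, 0 ≤ a i) ∧ (∀ i ∉ t, a i = 0) ∧
      x = ∑ i, a i • n i} := by
  classical
  let f : (t → ℝ) →ₗ[ℝ] E :=
    { toFun := fun b => ∑ i : t, b i • n i
      map_add' := fun b b' => by simp [add_smul, Finset.sum_add_distrib]
      map_smul' := fun r b => by simp [smul_smul, Finset.smul_sum]
      }
  have hker : LinearMap.ker f = ⊥ := by
    rw [LinearMap.ker_eq_bot']
    intro b hb
    have := (Fintype.linearIndependent_iff.mp hind) b hb
    funext i; exact this i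
  have hce := LinearMap.isClosedEmbedding_of_injective hker
  have hset : {x : E | ∃ a : Fin N → ℝ, (∀ i, 0 ≤ a i) ∧ (∀ i ∉ t, a i = 0) ∧
      x = ∑ i, a i • n i} = f '' {b | ∀ i, 0 ≤ b i} := by
    ext x
    constructor
    · rintro ⟨a, hann, hasupp, rfl⟩
      refine ⟨fun i => a i, fun i => hann i, ?_⟩
      show ∑ i : t, a i • n i = _
      rw [Finset.sum_coe_sort t (fun i => a i • n i)]
      refine Finset.sum_subset (Finset.subset_univ t) ?_
      intro i _ hi
      rw [hasupp i hi, zero_smul]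
    · rintro ⟨b, hbnn, rfl⟩
      refine ⟨fun i => if h : i ∈ t then b ⟨i, h⟩ else 0, fun i => ?_, fun i hi => by simp [hi], ?_⟩
      · by_cases h : i ∈ t
        · simpa [h] using hbnn ⟨i, h⟩
        · simp [h]
      · show (f b) = _
        rw [← Finset.sum_subset (Finset.subset_univ t)
          (by intro i _ hi; simp [hi]),
          ← Finset.sum_coe_sort t (fun i => (if h : i ∈ t then b ⟨i, h⟩ else 0) • n i)]
        exact Finset.sum_congr rfl (fun i _ => by simp [i.2])
  rw [hset]
  refine hce.isClosedMap _ ?_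
  have : {b : t → ℝ | ∀ i, 0 ≤ b i} = ⋂ i, (fun b : t → ℝ => b i) ⁻¹' Set.Ici 0 := by
    ext b; simp [Set.mem_iInter]
  rw [this]
  exact isClosed_iInter fun i => IsClosed.preimage (continuous_apply i) isClosed_Ici

lemma isClosed_cone {N : ℕ} (n : Fin N → E) (s : Finset (Fin N)) :
    IsClosed {x : E | ∃ a : Fin N → ℝ, (∀ i, 0 ≤ a i) ∧ (∀ i ∉ s, a i = 0) ∧
      x = ∑ i, a i • n i} := by
  classical
  have hrep : {x : E | ∃ a : Fin N → ℝ, (∀ i, 0 ≤ a i) ∧ (∀ i ∉ s, a i = 0) ∧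
      x = ∑ i, a i • n i} =
      ⋃ t ∈ {t : Finset (Fin N) | t ⊆ s ∧ LinearIndependent ℝ (fun i : t => n i)},
        {x : E | ∃ a : Fin N → ℝ, (∀ i, 0 ≤ a i) ∧ (∀ i ∉ t, a i = 0) ∧
          x = ∑ i, a i • n i} := by
    ext x
    simp only [Set.mem_iUnion, Set.mem_setOf_eq]
    constructor
    · rintro ⟨a, ha, hsupp, rfl⟩
      obtain ⟨t, b, hts, hind, hbnn, hbsupp, hbsum⟩ := cone_carath n s a ha hsupp
      exact ⟨t, ⟨hts, hind⟩, b, hbnn, hbsupp, hbsum.symm⟩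
    · rintro ⟨t, ⟨hts, _⟩, a, ha, hsupp, rfl⟩
      exact ⟨a, ha, fun i hi => hsupp i (fun h => hi (hts h)), rfl⟩
  rw [hrep]
  exact Set.Finite.isClosed_biUnion (Set.toFinite _)
    (fun t ht => isClosed_indep_cone n t ht.2)


lemma farkas_sep {N : ℕ} (n : Fin N → E) (s : Finset (Fin N)) (v : E)
    (hv : v ∉ {x : E | ∃ a : Fin N → ℝ, (∀ i, 0 ≤ a i) ∧ (∀ i ∉ s, a i = 0) ∧
      x = ∑ i, a i • n i}) :
    ∃ u : E, (∀ i ∈ s, 0 ≤ ⟪n i, u⟫) ∧ ⟪u, v⟫ < 0 := by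
  classical
  set K : ConvexCone ℝ E :=
    { carrier := {x : E | ∃ a : Fin N → ℝ, (∀ i, 0 ≤ a i) ∧ (∀ i ∉ s, a i = 0) ∧
        x = ∑ i, a i • n i}
      smul_mem' := by
        rintro c hc x ⟨a, ha, hsupp, rfl⟩
        refine ⟨fun i => c * a i, fun i => mul_nonneg hc.le (ha i),
          fun i hi => by simp [hsupp i hi], ?_⟩
        rw [Finset.smul_sum]
        exact Finset.sum_congr rfl (fun i _ => by rw [smul_smul])
      add_mem' := by
        rintro x ⟨a, ha, hasupp, rfl⟩ x' ⟨a', ha', ha'supp, rfl⟩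
        refine ⟨fun i => a i + a' i, fun i => add_nonneg (ha i) (ha' i),
          fun i hi => by simp [hasupp i hi, ha'supp i hi], ?_⟩
        rw [← Finset.sum_add_distrib]
        exact Finset.sum_congr rfl (fun i _ => (add_smul (a i) (a' i) (n i)).symm) }
  have hne : (K : Set E).Nonempty :=
    ⟨0, ⟨fun _ => 0, fun _ => le_refl 0, fun _ _ => rfl, by simp⟩⟩
  have hclosed : IsClosed (K : Set E) := isClosed_cone n s
  obtain ⟨u, hu1, hu2⟩ :=
    (by
      obtain ⟨u, hu1, hu2⟩ := ProperCone.hyperplane_separation'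
        ({ toSubmodule := K.toPointedCone (show (0 : E) ∈ K from
            ⟨fun _ => 0, fun _ => le_refl 0, fun _ _ => rfl, by simp⟩),
           isClosed' := hclosed } : ProperCone ℝ E) (x₀ := v) hv
      exact ⟨u, hu1, by rwa [real_inner_comm]⟩ :
      ∃ u : E, (∀ x ∈ (K : Set E), 0 ≤ ⟪x, u⟫) ∧ ⟪u, v⟫ < 0)
  refine ⟨u, fun i hi => ?_, hu2⟩
  refine hu1 (n i) ⟨fun j => if j = i then 1 else 0, fun j => by positivity,
    fun j hj => if_neg (fun h : j = i => hj (h ▸ hi)), ?_⟩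
  simp [ite_smul]


end Aux

/-- Lemma 3.3 (point form): for a convex polytope `X = ⋂ i, {x : ⟪x, nᵢ⟫ ≤ cᵢ}`,
a point `y ∈ X`, a nonzero `v ∈ N_y⁺X` and a nonzero `w ∈ T_y⁺X`, we have
`⟪v, w⟫ = 0` if and only if `v` lies in the convex cone generated by the
normals `nᵢ` of those half-spaces that are active at `y` and satisfy
`⟪w, nᵢ⟫ = 0`. -/
theorem normalCone_orthogonal_iff {m N : ℕ}
    (n : Fin N → EuclideanSpace ℝ (Fin m)) (c : Fin N → ℝ)
    (hn : ∀ i, n i ≠ 0)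
    (X : Set (EuclideanSpace ℝ (Fin m)))
    (hX : X = ⋂ i, {x | ⟪x, n i⟫ ≤ c i})
    (hcomp : IsCompact X)
    (y : EuclideanSpace ℝ (Fin m)) (hy : y ∈ X)
    (v w : EuclideanSpace ℝ (Fin m))
    (hv : v ∈ normalConePlus X y) (hv0 : v ≠ 0)
    (hw : w ∈ tangentConePlus X y) (hw0 : w ≠ 0) :
    ⟪v, w⟫ = 0 ↔
      ∃ a : Fin N → ℝ, (∀ i, 0 ≤ a i) ∧
        (∀ i, ¬(⟪y, n i⟫ = c i ∧ ⟪w, n i⟫ = 0) → a i = 0) ∧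
        v = ∑ i, a i • n i := by
  classical
  constructor
  · -- forward direction
    intro hvw
    by_contra hcon
    set s : Finset (Fin N) :=
      Finset.univ.filter (fun i => ⟪y, n i⟫ = c i ∧ ⟪w, n i⟫ = 0) with hs
    have hmem_s : ∀ i, i ∈ s ↔ (⟪y, n i⟫ = c i ∧ ⟪w, n i⟫ = 0) := by
      intro i; simp [hs]
    have hvnot : v ∉ {x : EuclideanSpace ℝ (Fin m) | ∃ a : Fin N → ℝ,
        (∀ i, 0 ≤ a i) ∧ (∀ i ∉ s, a i = 0) ∧ x = ∑ i, a i • n i} := by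
      rintro ⟨a, ha, hsupp, hsum⟩
      exact hcon ⟨a, ha, fun i hi => hsupp i (fun h => hi ((hmem_s i).mp h)), hsum⟩
    obtain ⟨u, hu1, hu2⟩ := farkas_sep n s v hvnot
    -- w is in the tangent cone, hence ⟪w, n i⟫ ≤ 0 for active i
    have hwact : ∀ i, ⟪y, n i⟫ = c i → ⟪w, n i⟫ ≤ 0 := by
      intro i hi
      have hcl : IsClosed {z : EuclideanSpace ℝ (Fin m) | ⟪z, n i⟫ ≤ 0} :=
        isClosed_le (Continuous.inner continuous_id continuous_const) continuous_const
      refine hcl.closure_subset_iff.mpr ?_ hw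
      rintro z ⟨ε, hε, hz⟩
      have hle : ⟪y + ε • z, n i⟫ ≤ c i := Set.mem_iInter.mp (hX ▸ hz) i
      rw [inner_add_left, real_inner_smul_left, hi] at hle
      have h2 : ε * ⟪z, n i⟫ ≤ 0 := by linarith
      exact le_of_not_gt fun hpos => absurd h2 (not_le.mpr (mul_pos hε hpos))
    -- pick δ > 0 making z := w + δ • (-u) feasible on active constraints
    set u' : EuclideanSpace ℝ (Fin m) := -u with hu'
    have hu'v : 0 < ⟪u', v⟫ := by
      rw [hu', inner_neg_left]; linarith
    have hu'le : ∀ i ∈ s, ⟪u', n i⟫ ≤ 0 := by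
      intro i hi
      rw [hu', inner_neg_left, real_inner_comm]
      linarith [hu1 i hi]
    set F : Fin N → ℝ := fun i =>
      if h : ⟪y, n i⟫ = c i ∧ ⟪w, n i⟫ < 0 then
        (-⟪w, n i⟫) / (1 + |⟪u', n i⟫|) else 1 with hF
    have hFpos : ∀ i, 0 < F i := by
      intro i
      by_cases h : ⟪y, n i⟫ = c i ∧ ⟪w, n i⟫ < 0
      · simp only [hF, dif_pos h]
        have h1 : (0:ℝ) < 1 + |⟪u', n i⟫| := by positivity
        exact div_pos (by linarith [h.2]) h1
      · simp only [hF, dif_neg h]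
        exact one_pos
    obtain ⟨δ, hδ, hδle⟩ := exists_pos_forall_le F hFpos
    set z : EuclideanSpace ℝ (Fin m) := w + δ • u' with hz
    have hzact : ∀ i, ⟪y, n i⟫ = c i → ⟪z, n i⟫ ≤ 0 := by
      intro i hi
      rw [hz, inner_add_left, real_inner_smul_left]
      rcases (hwact i hi).lt_or_eq with hlt | heq
      · have hFi := hδle i
        simp only [hF] at hFi
        split_ifs at hFi with h'
        · have h1 : (0:ℝ) < 1 + |⟪u', n i⟫| := by positivity
          rw [le_div_iff₀ h1] at hFi
          nlinarith [le_abs_self ⟪u', n i⟫, abs_nonneg ⟪u', n i⟫]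
        · exact absurd ⟨hi, hlt⟩ h'
      · have his : i ∈ s := (hmem_s i).mpr ⟨hi, heq⟩
        have := mul_nonpos_of_nonneg_of_nonpos hδ.le (hu'le i his)
        rw [heq]
        linarith
    obtain ⟨ε, hε, hmemX⟩ := feasible_dir n c X hX y hy z hzact
    have hnorm := hv _ hmemX
    rw [add_sub_cancel_left, real_inner_smul_left] at hnorm
    have hzv : ⟪z, v⟫ ≤ 0 := by nlinarith
    rw [hz, inner_add_left, real_inner_smul_left] at hzv
    have hwv : ⟪w, v⟫ = 0 := by rw [real_inner_comm]; exact hvw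
    nlinarith
  · rintro ⟨a, ha, hsupp, rfl⟩
    rw [sum_inner]
    refine Finset.sum_eq_zero (fun i _ => ?_)
    rw [real_inner_smul_left]
    by_cases h : ⟪y, n i⟫ = c i ∧ ⟪w, n i⟫ = 0
    · rw [real_inner_comm, h.2, mul_zero]
    · rw [hsupp i h, zero_mul]
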